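/- Let N ≥ 2, let α₁,…,α_N ∈ (0,1) with Σ αₖ = 1, and let P₁,…,P_N be points in the plane region Ω_ε = {(x₁,x₂) : x₁² ≤ x₂ ≤ x₁² + ε²} such that Σ αₖ Pₖ ∈ Ω_ε. Then there exists an index j, 1 ≤ j ≤ N, such that the point R_j = (1/(1-α_j)) Σ_{k≠j} αₖ Pₖ also lies in Ω_ε. -/

import Mathlib

/-- The parabolic strip Ω_ε = {(x₁,x₂) : x₁² ≤ x₂ ≤ x₁² + ε²}. -/
def OmegaSet (ε : ℝ) : Set (ℝ × ℝ) := {x | x.1 ^ 2 ≤ x.2 ∧ x.2 ≤ x.1 ^ 2 + ε ^ 2}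

theorem stmt0 (ε : ℝ) (hε : 0 < ε) (N : ℕ) (hN : 2 ≤ N)
    (a : Fin N → ℝ) (ha : ∀ k, a k ∈ Set.Ioo (0 : ℝ) 1) (hsum : ∑ k, a k = 1)
    (P : Fin N → ℝ × ℝ) (hP : ∀ k, P k ∈ OmegaSet ε)
    (havg : ∑ k, a k • P k ∈ OmegaSet ε) :
    ∃ j : Fin N, (1 - a j)⁻¹ • ∑ k ∈ Finset.univ.erase j, a k • P k ∈ OmegaSet ε := by
  set Q := ∑ k, a k • P k with hQ
  set R : Fin N → ℝ × ℝ :=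
    fun j => (1 - a j)⁻¹ • ∑ k ∈ Finset.univ.erase j, a k • P k with hRdef
  have ha1 : ∀ j, 0 < 1 - a j := fun j => by have := (ha j).2; linarith
  have hsumerase : ∀ j : Fin N, ∑ k ∈ Finset.univ.erase j, a k = 1 - a j := by
    intro j
    rw [Finset.sum_erase_eq_sub (Finset.mem_univ j), hsum]
  have hRform : ∀ j, R j = ∑ k ∈ Finset.univ.erase j, ((1 - a j)⁻¹ * a k) • P k := by
    intro j
    simp only [hRdef, Finset.smul_sum, smul_smul]
  have hconvsq : ConvexOn ℝ Set.univ fun x : ℝ => x ^ 2 := Even.convexOn_pow even_two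
  have hSconv : Convex ℝ {x : ℝ × ℝ | x.1 ^ 2 ≤ x.2} := by
    have := hconvsq.convex_epigraph
    convert this using 1
    ext x; simp
  -- lower constraint holds for every j
  have hlow : ∀ j, (R j).1 ^ 2 ≤ (R j).2 := by
    intro j
    have hmem := hSconv.sum_mem (t := Finset.univ.erase j)
      (w := fun k => (1 - a j)⁻¹ * a k) (z := P)
      (fun k _ => mul_nonneg (inv_nonneg.2 (ha1 j).le) (ha k).1.le)
      (by rw [← Finset.mul_sum, hsumerase j, inv_mul_cancel₀ (ha1 j).ne'])
      (fun k _ => (hP k).1)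
    rw [← hRform j] at hmem
    exact hmem
  -- upper constraint: argue by contradiction
  by_contra hcon
  push_neg at hcon
  have hup : ∀ j, (R j).1 ^ 2 + ε ^ 2 < (R j).2 := by
    intro j
    have := hcon j
    simp only [OmegaSet, Set.mem_setOf_eq, not_and] at this
    exact lt_of_not_ge (this (hlow j))
  -- Q is a convex combination of the R j with weights (1 - a j)/(N - 1)
  have hNpos : (0:ℝ) < (N:ℝ) - 1 := by
    have : (2:ℝ) ≤ (N:ℝ) := by exact_mod_cast hN
    linarith
  set b : Fin N → ℝ := fun j => (1 - a j) / ((N:ℝ) - 1) with hbdef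
  have hbsum : ∑ j, b j = 1 := by
    simp only [hbdef, div_eq_mul_inv, ← Finset.sum_mul]
    rw [Finset.sum_sub_distrib, hsum]
    simp only [Finset.sum_const, Finset.card_univ, Fintype.card_fin, nsmul_eq_mul, mul_one]
    field_simp
  have hQsum : ∑ j, b j • R j = Q := by
    have hterm : ∀ j : Fin N, b j • R j = ((N:ℝ) - 1)⁻¹ • (Q - a j • P j) := by
      intro j
      rw [hRdef]
      simp only [smul_smul]
      rw [Finset.sum_erase_eq_sub (Finset.mem_univ j), ← hQ]
      congr 1
      field_simp [hbdef, (ha1 j).ne']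
      simp only [hbdef]
      field_simp [hNpos.ne']
    rw [Finset.sum_congr rfl (fun j _ => hterm j), ← Finset.smul_sum,
      Finset.sum_sub_distrib, ← hQ]
    simp only [Finset.sum_const, Finset.card_univ, Fintype.card_fin]
    have hNQ : (N : ℕ) • Q - Q = ((N:ℝ) - 1) • Q := by
      rw [sub_smul, one_smul, Nat.cast_smul_eq_nsmul]
    rw [hNQ, smul_smul, inv_mul_cancel₀ hNpos.ne', one_smul]
  -- strict epigraph set is convex
  have hTconv : Convex ℝ {x : ℝ × ℝ | x.1 ^ 2 + ε ^ 2 < x.2} := by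
    have hc : ConvexOn ℝ Set.univ fun x : ℝ => x ^ 2 + ε ^ 2 :=
      hconvsq.add (convexOn_const _ convex_univ)
    have := hc.convex_strict_epigraph
    convert this using 1
    ext x; simp
  have hQT : Q ∈ {x : ℝ × ℝ | x.1 ^ 2 + ε ^ 2 < x.2} := by
    rw [← hQsum]
    exact hTconv.sum_mem (fun j _ => div_nonneg (ha1 j).le hNpos.le) hbsum
      (fun j _ => hup j)
  exact absurd havg.2 (not_le.2 hQT)
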